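/- Let R be a quasi-unital ring, and let i : R → R' be a morphism of non-unital rings such that R' is smooth as an R-bimodule (i.e., both R ⊗_R R' → R' and R' ⊗_R R → R' are isomorphisms, and the two-sided smoothening R ⊗_R R' ⊗_R R → R' is an isomorphism). Then R' is itself quasi-unital: R' ⊗_{R'} R' → R' is an isomorphism. -/

import Mathlib

open TensorProduct LinearMap

section Bar

variable (A : Type) [NonUnitalRing A] [Module ℂ A] [SMulCommClass ℂ A A]
  [IsScalarTower ℂ A A]

/-- The bar differential `A ⊗ A ⊗ A → A ⊗ A`. -/
noncomputable def barD : (A ⊗[ℂ] (A ⊗[ℂ] A)) →ₗ[ℂ] A ⊗[ℂ] A :=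
  (rTensor A (mul' ℂ A)) ∘ₗ (TensorProduct.assoc ℂ A A A).symm.toLinearMap
    - lTensor A (mul' ℂ A)

/-- `A` is quasi-unital: the canonical map `A ⊗_A A → A` is an isomorphism. -/
def IsQuasiUnital : Prop :=
  ∃ f : ((A ⊗[ℂ] A) ⧸ LinearMap.range (barD A)) →ₗ[ℂ] A,
    f ∘ₗ (LinearMap.range (barD A)).mkQ = mul' ℂ A ∧ Function.Bijective f

end Bar

section Ext

variable (R R' : Type)
  [NonUnitalRing R] [Module ℂ R] [SMulCommClass ℂ R R] [IsScalarTower ℂ R R]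
  [NonUnitalRing R'] [Module ℂ R'] [SMulCommClass ℂ R' R'] [IsScalarTower ℂ R' R']
  (i : R →ₗ[ℂ] R')

/-- The left action `R ⊗ R' → R'`, `r ⊗ r' ↦ i(r)·r'`. -/
noncomputable def actL : R ⊗[ℂ] R' →ₗ[ℂ] R' := (mul' ℂ R') ∘ₗ rTensor R' i

/-- The right action `R' ⊗ R → R'`, `r' ⊗ r ↦ r'·i(r)`. -/
noncomputable def actR : R' ⊗[ℂ] R →ₗ[ℂ] R' := (mul' ℂ R') ∘ₗ lTensor R' i

/-- The bar differential `R ⊗ R ⊗ R' → R ⊗ R'` for the left `R`-module `R'`. -/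
noncomputable def barDL : (R ⊗[ℂ] (R ⊗[ℂ] R')) →ₗ[ℂ] R ⊗[ℂ] R' :=
  (rTensor R' (mul' ℂ R)) ∘ₗ (TensorProduct.assoc ℂ R R R').symm.toLinearMap
    - lTensor R (actL R R' i)

/-- The bar differential `R' ⊗ R ⊗ R → R' ⊗ R` for the right `R`-module `R'`. -/
noncomputable def barDR : (R' ⊗[ℂ] (R ⊗[ℂ] R)) →ₗ[ℂ] R' ⊗[ℂ] R :=
  (rTensor R (actR R R' i)) ∘ₗ (TensorProduct.assoc ℂ R' R R).symm.toLinearMap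
    - lTensor R' (mul' ℂ R)

/-- The left relation differential `R ⊗ R ⊗ (R' ⊗ R) → R ⊗ (R' ⊗ R)` used for the
two-sided relative tensor product `R ⊗_R R' ⊗_R R`. -/
noncomputable def barDT₁ : (R ⊗[ℂ] (R ⊗[ℂ] (R' ⊗[ℂ] R))) →ₗ[ℂ] R ⊗[ℂ] (R' ⊗[ℂ] R) :=
  (rTensor (R' ⊗[ℂ] R) (mul' ℂ R)) ∘ₗ
      (TensorProduct.assoc ℂ R R (R' ⊗[ℂ] R)).symm.toLinearMap
    - lTensor R ((rTensor R (actL R R' i)) ∘ₗ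
        (TensorProduct.assoc ℂ R R' R).symm.toLinearMap)

/-- The right relation differential `R ⊗ (R' ⊗ R ⊗ R) → R ⊗ (R' ⊗ R)` used for the
two-sided relative tensor product `R ⊗_R R' ⊗_R R`. -/
noncomputable def barDT₂ : (R ⊗[ℂ] (R' ⊗[ℂ] (R ⊗[ℂ] R))) →ₗ[ℂ] R ⊗[ℂ] (R' ⊗[ℂ] R) :=
  lTensor R (barDR R R' i)

/-- The relations submodule for `R ⊗_R R' ⊗_R R`. -/
noncomputable def twoSidedRel : Submodule ℂ (R ⊗[ℂ] (R' ⊗[ℂ] R)) :=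
  LinearMap.range (barDT₁ R R' i) ⊔ LinearMap.range (barDT₂ R R' i)

/-- The two-sided action map `R ⊗ R' ⊗ R → R'`, `r ⊗ r' ⊗ s ↦ i(r)·r'·i(s)`. -/
noncomputable def actT : (R ⊗[ℂ] (R' ⊗[ℂ] R)) →ₗ[ℂ] R' :=
  (actL R R' i) ∘ₗ lTensor R (actR R R' i)


section AuxProof

variable (R R' : Type)
  [NonUnitalRing R] [Module ℂ R] [SMulCommClass ℂ R R] [IsScalarTower ℂ R R]
  [NonUnitalRing R'] [Module ℂ R'] [SMulCommClass ℂ R' R'] [IsScalarTower ℂ R' R']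
  (i : R →ₗ[ℂ] R')

lemma mul'_comp_barD : (mul' ℂ R') ∘ₗ barD R' = 0 := by
  ext a b c
  simp [barD, mul_assoc]

/-- Auxiliary map `R ⊗ R' ⊗ R → R' ⊗ R'`, `r ⊗ x ⊗ s ↦ (i(r)·x) ⊗ i(s)`. -/
noncomputable def phiAux : (R ⊗[ℂ] (R' ⊗[ℂ] R)) →ₗ[ℂ] R' ⊗[ℂ] R' :=
  lTensor R' i ∘ₗ rTensor R (actL R R' i) ∘ₗ (TensorProduct.assoc ℂ R R' R).symm.toLinearMap

lemma phiAux_tmul (r : R) (x : R') (s : R) :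
    phiAux R R' i (r ⊗ₜ (x ⊗ₜ s)) = (i r * x) ⊗ₜ i s := by
  simp [phiAux, actL]

lemma barD_tmul (a b c : R') :
    barD R' (a ⊗ₜ (b ⊗ₜ c)) = (a * b) ⊗ₜ c - a ⊗ₜ (b * c) := by
  simp [barD]

end AuxProof

/-- Extension of quasi-unital rings: if `R` is quasi-unital and `i : R → R'` is a
morphism of non-unital rings such that `R'` is smooth as an `R`-bimodule (on the left,
on the right, and two-sidedly), then `R'` is itself quasi-unital. -/
theorem quasiUnital_of_smooth_extension
    (hi : ∀ a b : R, i (a * b) = i a * i b)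
    (hR : IsQuasiUnital R)
    -- `R ⊗_R R' → R'` is an isomorphism
    (hL : ∃ fL : ((R ⊗[ℂ] R') ⧸ LinearMap.range (barDL R R' i)) →ₗ[ℂ] R',
      fL ∘ₗ (LinearMap.range (barDL R R' i)).mkQ = actL R R' i ∧ Function.Bijective fL)
    -- `R' ⊗_R R → R'` is an isomorphism
    (hRt : ∃ fR : ((R' ⊗[ℂ] R) ⧸ LinearMap.range (barDR R R' i)) →ₗ[ℂ] R',
      fR ∘ₗ (LinearMap.range (barDR R R' i)).mkQ = actR R R' i ∧ Function.Bijective fR)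
    -- `R ⊗_R R' ⊗_R R → R'` is an isomorphism
    (hT : ∃ fT : ((R ⊗[ℂ] (R' ⊗[ℂ] R)) ⧸ twoSidedRel R R' i) →ₗ[ℂ] R',
      fT ∘ₗ (twoSidedRel R R' i).mkQ = actT R R' i ∧ Function.Bijective fT) :
    IsQuasiUnital R' := by
  classical
  obtain ⟨fL, hfL, hfLbij⟩ := hL
  obtain ⟨fR, hfR, hfRbij⟩ := hRt
  obtain ⟨fT, hfT, hfTbij⟩ := hT
  have hactL : Function.Surjective (actL R R' i) := by
    rw [← hfL]; exact hfLbij.2.comp (Submodule.mkQ_surjective _)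
  have hactR : Function.Surjective (actR R R' i) := by
    rw [← hfR]; exact hfRbij.2.comp (Submodule.mkQ_surjective _)
  -- the induced map on the quotient
  have hker : LinearMap.range (barD R') ≤ ker (mul' ℂ R') := by
    rw [range_le_ker_iff]; exact mul'_comp_barD R'
  refine ⟨Submodule.liftQ _ (mul' ℂ R') hker, Submodule.liftQ_mkQ _ _ _, ?_⟩
  set f : ((R' ⊗[ℂ] R') ⧸ LinearMap.range (barD R')) →ₗ[ℂ] R' :=
    Submodule.liftQ _ (mul' ℂ R') hker with hfdef
  have hf : f ∘ₗ (LinearMap.range (barD R')).mkQ = mul' ℂ R' := Submodule.liftQ_mkQ _ _ _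
  -- phiAux descends to the quotient
  have hkerT : twoSidedRel R R' i ≤
      ker ((LinearMap.range (barD R')).mkQ ∘ₗ phiAux R R' i) := by
    rw [twoSidedRel, sup_le_iff]
    constructor
    · rw [range_le_ker_iff]
      ext r a x s
      have h1 : phiAux R R' i (barDT₁ R R' i (r ⊗ₜ (a ⊗ₜ (x ⊗ₜ s)))) = 0 := by
        simp [barDT₁, phiAux_tmul, actL, hi, mul_assoc, TensorProduct.sub_tmul,
          tmul_sub]
      simp only [TensorProduct.AlgebraTensorModule.curry_apply, TensorProduct.curry_apply,
        coe_restrictScalars, coe_comp, Function.comp_apply, h1, map_zero, LinearMap.zero_apply]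
    · rw [range_le_ker_iff]
      ext r x a b
      have h2 : phiAux R R' i (barDT₂ R R' i (r ⊗ₜ (x ⊗ₜ (a ⊗ₜ b)))) =
          (i r * (x * i a)) ⊗ₜ i b - (i r * x) ⊗ₜ i (a * b) := by
        simp [barDT₂, barDR, actR, phiAux_tmul, tmul_sub, map_sub]
      simp only [TensorProduct.AlgebraTensorModule.curry_apply, TensorProduct.curry_apply,
        coe_restrictScalars, coe_comp, Function.comp_apply, LinearMap.zero_apply,
        Submodule.mkQ_apply, h2]
      rw [Submodule.Quotient.mk_eq_zero]
      refine ⟨(i r * x) ⊗ₜ (i a ⊗ₜ i b), ?_⟩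
      rw [barD_tmul, hi, mul_assoc]
  set g : ((R ⊗[ℂ] (R' ⊗[ℂ] R)) ⧸ twoSidedRel R R' i) →ₗ[ℂ]
      ((R' ⊗[ℂ] R') ⧸ LinearMap.range (barD R')) :=
    Submodule.liftQ _ ((LinearMap.range (barD R')).mkQ ∘ₗ phiAux R R' i) hkerT with hgdef
  have hg : g ∘ₗ (twoSidedRel R R' i).mkQ =
      (LinearMap.range (barD R')).mkQ ∘ₗ phiAux R R' i := Submodule.liftQ_mkQ _ _ _
  -- f ∘ g = fT
  have hfg : f ∘ₗ g = fT := by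
    apply Submodule.linearMap_qext
    rw [comp_assoc, hg, ← comp_assoc, hf, hfT]
    ext r x s
    simp [phiAux_tmul, actT, actL, actR, mul_assoc]
  set eT := LinearEquiv.ofBijective fT hfTbij with heT
  have heTapp : ∀ v, eT v = fT v := fun _ => rfl
  set G : R' →ₗ[ℂ] ((R' ⊗[ℂ] R') ⧸ LinearMap.range (barD R')) :=
    g ∘ₗ (eT.symm : R' →ₗ[ℂ] _) with hGdef
  -- right inverse : f ∘ G = id
  have hright : ∀ y, f (G y) = y := by
    intro y
    have h1 : f (g (eT.symm y)) = fT (eT.symm y) :=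
      congrFun (congrArg (fun h => h.toFun) hfg) _
    have h2 : fT (eT.symm y) = eT (eT.symm y) := (heTapp _).symm
    rw [hGdef]
    simp only [coe_comp, Function.comp_apply, LinearEquiv.coe_coe]
    rw [h1, h2, eT.apply_symm_apply]
  -- left inverse : G ∘ f = id
  have hpsi : Function.Surjective
      (TensorProduct.map (actL R R' i) (actR R R' i)) :=
    TensorProduct.map_surjective hactL hactR
  have hleft : G ∘ₗ f = LinearMap.id := by
    apply Submodule.linearMap_qext
    rw [comp_assoc, hf, id_comp]
    rw [← LinearMap.cancel_right hpsi]
    ext r x y s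
    simp only [TensorProduct.AlgebraTensorModule.curry_apply, TensorProduct.curry_apply,
      coe_restrictScalars, coe_comp, Function.comp_apply, TensorProduct.map_tmul,
      Submodule.mkQ_apply]
    have hact : actL R R' i (r ⊗ₜ x) = i r * x := by simp [actL]
    have hact2 : actR R R' i (y ⊗ₜ s) = y * i s := by simp [actR]
    rw [hact, hact2]
    have key : (i r * x) * (y * i s) = actT R R' i (r ⊗ₜ ((x * y) ⊗ₜ s)) := by
      simp [actT, actL, actR, mul_assoc]
    rw [mul'_apply, key, ← hfT]
    have : eT.symm (fT ((twoSidedRel R R' i).mkQ (r ⊗ₜ ((x * y) ⊗ₜ s)))) =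
        (twoSidedRel R R' i).mkQ (r ⊗ₜ ((x * y) ⊗ₜ s)) := eT.symm_apply_apply _
    simp only [hGdef, coe_comp, Function.comp_apply, LinearEquiv.coe_coe,
      Submodule.mkQ_apply] at this ⊢
    rw [this]
    have hgv : g (Submodule.Quotient.mk (r ⊗ₜ ((x * y) ⊗ₜ s))) =
        Submodule.Quotient.mk (phiAux R R' i (r ⊗ₜ ((x * y) ⊗ₜ s))) :=
      congrFun (congrArg (fun h => h.toFun) hg) _
    rw [hgv, phiAux_tmul]
    rw [Submodule.Quotient.eq]
    refine ⟨(i r * x) ⊗ₜ (y ⊗ₜ i s), ?_⟩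
    rw [barD_tmul, mul_assoc]
  exact Function.bijective_iff_has_inverse.mpr
    ⟨G, fun z => by simpa using congrFun (congrArg (fun h => h.toFun) hleft) z,
      hright⟩


end Ext
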